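/- Assume J positive, strictly decreasing, and 0 < h < ∑_{n=1}^{N-1} J(n). Then the communication height between the all-minus and all-plus configurations satisfies Φ(-1, +1) = max_{0 ≤ k ≤ N} H(L^(k)). -/

import Mathlib

open Finset

/-- Long-range Ising Hamiltonian with free boundary conditions on {0,...,N-1}:
`H(σ) = -∑_{i<j} J(|i-j|) σᵢ σⱼ - h ∑ᵢ σᵢ`. -/
noncomputable def H (N : ℕ) (J : ℕ → ℝ) (h : ℝ) (σ : Fin N → ℝ) : ℝ :=
  -(∑ i : Fin N, ∑ j : Fin N,
      if (i : ℕ) < (j : ℕ) then J (Nat.dist (i : ℕ) (j : ℕ)) * σ i * σ j else 0)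
    - h * ∑ i : Fin N, σ i

/-- A spin configuration takes values in {-1, +1}. -/
def IsConfig {N : ℕ} (σ : Fin N → ℝ) : Prop := ∀ i, σ i = 1 ∨ σ i = -1

/-- The configuration `L^(k)`: +1 on the first k sites, -1 elsewhere. -/
def Lconf (N k : ℕ) : Fin N → ℝ := fun i => if (i : ℕ) < k then 1 else -1

/-- The configuration `R^(k)`: +1 on the last k sites, -1 elsewhere. -/
def Rconf (N k : ℕ) : Fin N → ℝ := fun i => if N - k ≤ (i : ℕ) then 1 else -1

/-- Two configurations related by a single spin flip. -/
def IsFlip {N : ℕ} (a b : Fin N → ℝ) : Prop := ∃ i, b = Function.update a i (-(a i))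

/-- A path of configurations joining σ to η, changing one spin at a time. -/
def IsPathFrom {N : ℕ} (γ : List (Fin N → ℝ)) (σ η : Fin N → ℝ) : Prop :=
  γ ≠ [] ∧ γ.head? = some σ ∧ γ.getLast? = some η ∧ (∀ τ ∈ γ, IsConfig τ) ∧
    List.Chain' IsFlip γ

/-- Communication height: minimal over paths from σ to η of the maximal energy along the path. -/
noncomputable def Phi (N : ℕ) (J : ℕ → ℝ) (h : ℝ) (σ η : Fin N → ℝ) : ℝ :=
  sInf {x | ∃ γ : List (Fin N → ℝ), IsPathFrom γ σ η ∧
    x = (γ.map (H N J h)).foldr max (H N J h σ)}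

namespace CH

def cnt (N : ℕ) (f : ℕ → Bool) : ℕ := ∑ i ∈ range N, if f i then 1 else 0

def Se (N e : ℕ) (f : ℕ → Bool) : ℕ :=
  ∑ i ∈ range N, ∑ j ∈ range N, if i < j ∧ j ≤ i + e ∧ f i ≠ f j then 1 else 0

def chi (k : ℕ) : ℕ → Bool := fun i => decide (i < k)

lemma cnt_le (N : ℕ) (f : ℕ → Bool) : cnt N f ≤ N := by
  calc cnt N f ≤ ∑ i ∈ range N, 1 := Finset.sum_le_sum (fun i _ => by split <;> omega)
    _ = N := by simp

lemma cnt_congr {N : ℕ} {f g : ℕ → Bool} (h : ∀ i < N, f i = g i) : cnt N f = cnt N g := by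
  refine Finset.sum_congr rfl (fun i hi => by rw [h i (mem_range.mp hi)])

lemma Se_congr {N e : ℕ} {f g : ℕ → Bool} (h : ∀ i < N, f i = g i) : Se N e f = Se N e g := by
  refine Finset.sum_congr rfl (fun i hi => Finset.sum_congr rfl (fun j hj => by
    rw [h i (mem_range.mp hi), h j (mem_range.mp hj)]))

lemma Se_not (N e : ℕ) (f : ℕ → Bool) : Se N e (fun i => !f i) = Se N e f := by
  refine Finset.sum_congr rfl (fun i _ => Finset.sum_congr rfl (fun j _ => ?_))
  congr 1
  simp only [eq_iff_iff, and_congr_right_iff]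
  intro _ _
  cases hf : f i <;> cases hg : f j <;> simp

lemma cnt_not (N : ℕ) (f : ℕ → Bool) : cnt N (fun i => !f i) + cnt N f = N := by
  unfold cnt
  rw [← Finset.sum_add_distrib]
  calc (∑ i ∈ range N, ((if (!f i) = true then 1 else 0) + if f i = true then 1 else 0))
      = ∑ i ∈ range N, 1 := Finset.sum_congr rfl (fun i _ => by cases h : f i <;> simp)
    _ = N := by simp

lemma cnt_reflect (N : ℕ) (f : ℕ → Bool) : cnt N (fun i => f (N - 1 - i)) = cnt N f := by
  unfold cnt
  exact Finset.sum_range_reflect (fun i => if f i then 1 else 0) N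

lemma Se_reflect (N e : ℕ) (f : ℕ → Bool) : Se N e (fun i => f (N - 1 - i)) = Se N e f := by
  unfold Se
  rw [← Finset.sum_product', ← Finset.sum_product']
  refine Finset.sum_nbij' (fun p => (N - 1 - p.2, N - 1 - p.1)) (fun p => (N - 1 - p.2, N - 1 - p.1)) ?_ ?_ ?_ ?_ ?_
  · rintro ⟨i, j⟩ hp
    simp only [Finset.mem_product, Finset.mem_range] at hp ⊢
    omega
  · rintro ⟨i, j⟩ hp
    simp only [Finset.mem_product, Finset.mem_range] at hp ⊢
    omega
  · rintro ⟨i, j⟩ hp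
    simp only [Finset.mem_product, Finset.mem_range] at hp
    refine Prod.ext ?_ ?_ <;> dsimp only <;> omega
  · rintro ⟨i, j⟩ hp
    simp only [Finset.mem_product, Finset.mem_range] at hp
    refine Prod.ext ?_ ?_ <;> dsimp only <;> omega
  · rintro ⟨i, j⟩ hp
    simp only [Finset.mem_product, Finset.mem_range] at hp
    obtain ⟨hi, hj⟩ := hp
    dsimp only
    by_cases hij : i < j
    · congr 1
      simp only [eq_iff_iff]
      constructor
      · rintro ⟨-, h2, h3⟩; exact ⟨by omega, by omega, h3.symm⟩
      · rintro ⟨-, h2, h3⟩; exact ⟨by omega, by omega, h3.symm⟩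
    · rw [if_neg (by tauto), if_neg (by rintro ⟨h1, -, -⟩; omega)]

lemma sum_if_lt (N m : ℕ) : (∑ i ∈ range N, if i < m then 1 else 0) = min m N := by
  induction N with
  | zero => simp
  | succ n ih => rw [Finset.sum_range_succ, ih]; split <;> omega

lemma sum_if_band (N c k : ℕ) : (∑ i ∈ range N, if c ≤ i ∧ i < k then 1 else 0) = min k N - c := by
  induction N with
  | zero => simp
  | succ n ih => rw [Finset.sum_range_succ, ih]; split <;> omega

lemma Se_peel (N e : ℕ) (f : ℕ → Bool) :
    Se (N + 1) e f = Se N e f + ∑ i ∈ range N, (if N ≤ i + e ∧ f i ≠ f N then 1 else 0) := by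
  unfold Se
  rw [Finset.sum_range_succ]
  have hlast : (∑ j ∈ range (N + 1), if N < j ∧ j ≤ N + e ∧ f N ≠ f j then 1 else 0) = 0 := by
    refine Finset.sum_eq_zero (fun j hj => ?_)
    rw [if_neg]
    rintro ⟨h1, -, -⟩
    exact absurd (mem_range.mp hj) (by omega)
  rw [hlast, add_zero, ← Finset.sum_add_distrib]
  refine Finset.sum_congr rfl (fun i hi => ?_)
  rw [Finset.sum_range_succ]
  congr 1
  have hi' := mem_range.mp hi
  congr 1
  simp only [eq_iff_iff]
  constructor
  · rintro ⟨-, h2, h3⟩; exact ⟨h2, h3⟩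
  · rintro ⟨h2, h3⟩; exact ⟨hi', h2, h3⟩

lemma cnt_succ (N : ℕ) (f : ℕ → Bool) :
    cnt (N + 1) f = cnt N f + if f N then 1 else 0 := Finset.sum_range_succ _ N

lemma cnt_chi (N k : ℕ) : cnt N (chi k) = min k N := by
  unfold cnt chi
  simp only [decide_eq_true_eq]
  exact sum_if_lt N k

/-- The peel step : if `f N = false` then the claim at `N+1` follows from the claim at `N`. -/
lemma stepA (N e : ℕ) (ih : ∀ f : ℕ → Bool, Se N e (chi (cnt N f)) ≤ Se N e f)
    (f : ℕ → Bool) (hf : f N = false) :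
    Se (N + 1) e (chi (cnt (N + 1) f)) ≤ Se (N + 1) e f := by
  have hk : cnt (N + 1) f = cnt N f := by rw [cnt_succ, hf]; simp
  set k := cnt N f with hkdef
  have hkN : k ≤ N := cnt_le N f
  have hchiN : chi k N = false := by simp [chi]; omega
  rw [hk, Se_peel, Se_peel]
  have hW2 : (∑ i ∈ range N, if N ≤ i + e ∧ chi k i ≠ chi k N then 1 else 0)
      = min k N - (N - e) := by
    rw [← sum_if_band N (N - e) k]
    refine Finset.sum_congr rfl (fun i hi => ?_)
    congr 1
    have hNk : decide (N < k) = false := by simp; omega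
    simp only [chi, hNk, ne_eq, decide_eq_false_iff_not, not_not, eq_iff_iff]
    constructor
    · rintro ⟨h1, h2⟩; exact ⟨by omega, h2⟩
    · rintro ⟨h1, h2⟩; exact ⟨by omega, h2⟩
  have hWf : k ≤ (∑ i ∈ range N, if N ≤ i + e ∧ f i ≠ f N then 1 else 0) + (N - e) := by
    have h1 : (∑ i ∈ range N, if i + e < N then 1 else 0) = N - e := by
      have h2 : (∑ i ∈ range N, if i + e < N then 1 else 0)
          = ∑ i ∈ range N, if i < N - e then 1 else 0 := by
        refine Finset.sum_congr rfl (fun i hi => ?_)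
        congr 1
        simp only [eq_iff_iff]
        omega
      rw [h2, sum_if_lt]
      omega
    calc k = ∑ i ∈ range N, (if f i then 1 else 0) := rfl
      _ ≤ ∑ i ∈ range N, ((if N ≤ i + e ∧ f i ≠ f N then 1 else 0) + (if i + e < N then 1 else 0)) := by
          refine Finset.sum_le_sum (fun i hi => ?_)
          simp only [hf, ne_eq, Bool.not_eq_false]
          by_cases hfi : f i = true
          · simp only [hfi, and_true, if_true]
            split_ifs <;> omega
          · simp [hfi]
      _ = (∑ i ∈ range N, if N ≤ i + e ∧ f i ≠ f N then 1 else 0) + (N - e) := by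
          rw [Finset.sum_add_distrib, h1]
  have := ih f
  rw [← hkdef] at this
  rw [hW2]
  omega

lemma chi_symm (M e k : ℕ) (hk : k ≤ M) : Se M e (chi (M - k)) = Se M e (chi k) := by
  have h1 : Se M e (fun i => !(chi (M - k) i)) = Se M e (chi (M - k)) := Se_not M e _
  have h2 : Se M e (fun i => !(chi (M - k) i)) = Se M e (fun i => chi k (M - 1 - i)) := by
    refine Se_congr (fun i hi => ?_)
    simp only [chi]
    rw [show (decide (M - 1 - i < k)) = decide (¬(i < M - k)) from
      decide_eq_decide.mpr (by omega), decide_not]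
  have h3 : Se M e (fun i => chi k (M - 1 - i)) = Se M e (chi k) := Se_reflect M e (chi k)
  rw [← h1, h2, h3]

theorem Se_key (e : ℕ) : ∀ N (f : ℕ → Bool), Se N e (chi (cnt N f)) ≤ Se N e f := by
  intro N
  induction N with
  | zero => intro f; simp [Se]
  | succ N ih =>
    intro f
    by_cases hfN : f N = false
    · exact stepA N e ih f hfN
    · by_cases hf0 : f 0 = false
      · -- reflect
        set g : ℕ → Bool := fun i => f (N + 1 - 1 - i) with hg
        have hgN : g N = false := by
          have : N + 1 - 1 - N = 0 := by omega
          rw [hg]; simp only [this]; exact hf0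
        have hcnt : cnt (N + 1) g = cnt (N + 1) f := cnt_reflect (N + 1) f
        have hSe : Se (N + 1) e g = Se (N + 1) e f := Se_reflect (N + 1) e f
        calc Se (N + 1) e (chi (cnt (N + 1) f)) = Se (N + 1) e (chi (cnt (N + 1) g)) := by rw [hcnt]
          _ ≤ Se (N + 1) e g := stepA N e ih g hgN
          _ = Se (N + 1) e f := hSe
      · -- complement
        set g : ℕ → Bool := fun i => !f i with hg
        have hgN : g N = false := by rw [hg]; simp only [Bool.not_eq_false']; simpa using hfN
        have hcnt : cnt (N + 1) g = (N + 1) - cnt (N + 1) f := by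
          have := cnt_not (N + 1) f
          rw [← hg] at this
          omega
        have hSe : Se (N + 1) e g = Se (N + 1) e f := Se_not (N + 1) e f
        have hk : cnt (N + 1) f ≤ N + 1 := cnt_le _ _
        calc Se (N + 1) e (chi (cnt (N + 1) f))
            = Se (N + 1) e (chi ((N + 1) - cnt (N + 1) f)) := (chi_symm (N + 1) e _ hk).symm
          _ = Se (N + 1) e (chi (cnt (N + 1) g)) := by rw [hcnt]
          _ ≤ Se (N + 1) e g := stepA N e ih g hgN
          _ = Se (N + 1) e f := hSe

lemma Stot (N : ℕ) (f : ℕ → Bool) : Se N (N - 1) f = cnt N f * (N - cnt N f) := by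
  have hB : (∑ i ∈ range N, ∑ j ∈ range N, if i < j ∧ f i = false ∧ f j = true then 1 else 0)
      = ∑ i ∈ range N, ∑ j ∈ range N, if j < i ∧ f i = true ∧ f j = false then 1 else 0 := by
    rw [Finset.sum_comm]
    refine Finset.sum_congr rfl fun i _ => Finset.sum_congr rfl fun j _ => ?_
    congr 1
    simp only [eq_iff_iff]
    tauto
  have h2 : (∑ j ∈ range N, if f j = false then 1 else 0) = N - cnt N f := by
    have h3 : (∑ j ∈ range N, if f j = false then 1 else 0) = cnt N (fun i => !f i) := by
      unfold cnt
      refine Finset.sum_congr rfl fun j _ => ?_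
      cases h : f j <;> simp [h]
    have h4 := cnt_not N f
    omega
  calc Se N (N - 1) f
      = ∑ i ∈ range N, ∑ j ∈ range N, if i < j ∧ f i ≠ f j then 1 else 0 := by
        refine Finset.sum_congr rfl fun i hi => Finset.sum_congr rfl fun j hj => ?_
        have hj' := mem_range.mp hj
        congr 1
        simp only [eq_iff_iff]
        constructor
        · rintro ⟨a1, a2, a3⟩; exact ⟨a1, a3⟩
        · rintro ⟨a1, a3⟩; exact ⟨a1, by omega, a3⟩
    _ = (∑ i ∈ range N, ∑ j ∈ range N, if i < j ∧ f i = true ∧ f j = false then 1 else 0)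
        + (∑ i ∈ range N, ∑ j ∈ range N, if i < j ∧ f i = false ∧ f j = true then 1 else 0) := by
        rw [← Finset.sum_add_distrib]
        refine Finset.sum_congr rfl fun i _ => ?_
        rw [← Finset.sum_add_distrib]
        refine Finset.sum_congr rfl fun j _ => ?_
        by_cases hij : i < j <;> cases hfi : f i <;> cases hfj : f j <;> simp [hij, hfi, hfj]
    _ = ∑ i ∈ range N, ∑ j ∈ range N,
          ((if i < j ∧ f i = true ∧ f j = false then 1 else 0)
            + (if j < i ∧ f i = true ∧ f j = false then 1 else 0)) := by
        rw [hB, ← Finset.sum_add_distrib]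
        refine Finset.sum_congr rfl fun i _ => ?_
        rw [← Finset.sum_add_distrib]
    _ = ∑ i ∈ range N, ∑ j ∈ range N, (if f i = true then 1 else 0) * (if f j = false then 1 else 0) := by
        refine Finset.sum_congr rfl fun i _ => Finset.sum_congr rfl fun j _ => ?_
        by_cases hfi : f i = true <;> by_cases hfj : f j = false <;>
          simp only [hfi, hfj, and_true, and_false, if_false, if_true, eq_self_iff_true]
        · have hne : i ≠ j := by
            intro hE
            rw [hE, hfj] at hfi
            exact Bool.false_ne_true hfi
          have h5 : ¬ (f j = false) → False := fun hc => hc hfj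
          split_ifs <;> omega
        · simp [hfj]
        · simp [hfi]
        · simp [hfi, hfj]
    _ = cnt N f * (N - cnt N f) := by
        rw [← Finset.sum_mul_sum, h2]
        rfl

noncomputable def EJ (N : ℕ) (J : ℕ → ℝ) (f : ℕ → Bool) : ℝ :=
  ∑ i ∈ range N, ∑ j ∈ range N, if i < j ∧ f i ≠ f j then J (j - i) else 0

lemma EJ_congr {N : ℕ} (J : ℕ → ℝ) {f g : ℕ → Bool} (h : ∀ i < N, f i = g i) :
    EJ N J f = EJ N J g := by
  refine Finset.sum_congr rfl (fun i hi => Finset.sum_congr rfl (fun j hj => by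
    rw [h i (mem_range.mp hi), h j (mem_range.mp hj)]))

lemma telescope (J : ℕ → ℝ) (d : ℕ) : ∀ m, d ≤ m →
    (∑ e ∈ Finset.Icc d m, (J e - J (e + 1))) = J d - J (m + 1) := by
  intro m
  induction m with
  | zero => intro hd; interval_cases d; simp
  | succ n ih =>
    intro hd
    rcases Nat.lt_or_ge d (n + 1) with hlt | hge
    · rw [Finset.sum_Icc_succ_top (by omega), ih (by omega)]
      ring
    · have : d = n + 1 := by omega
      subst this
      simp

lemma EJ_eq (N : ℕ) (J : ℕ → ℝ) (f : ℕ → Bool) :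
    EJ N J f = J N * (Se N (N - 1) f : ℝ)
      + ∑ e ∈ Finset.Icc 1 (N - 1), (J e - J (e + 1)) * (Se N e f : ℝ) := by
  have cast_Se : ∀ e : ℕ, ((Se N e f : ℕ) : ℝ)
      = ∑ i ∈ range N, ∑ j ∈ range N, (if i < j ∧ j ≤ i + e ∧ f i ≠ f j then (1:ℝ) else 0) := by
    intro e
    unfold Se
    push_cast
    rfl
  have key : ∀ i ∈ range N, ∀ j ∈ range N,
      (if i < j ∧ f i ≠ f j then J (j - i) else 0)
      = J N * (if i < j ∧ j ≤ i + (N - 1) ∧ f i ≠ f j then (1:ℝ) else 0)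
        + ∑ e ∈ Finset.Icc 1 (N - 1),
            (J e - J (e + 1)) * (if i < j ∧ j ≤ i + e ∧ f i ≠ f j then (1:ℝ) else 0) := by
    intro i hi j hj
    rw [mem_range] at hi hj
    by_cases hc : i < j ∧ f i ≠ f j
    · obtain ⟨hij, hfij⟩ := hc
      have hd2 : j - i ≤ N - 1 := by omega
      rw [if_pos ⟨hij, hfij⟩, if_pos ⟨hij, by omega, hfij⟩, mul_one]
      have hsum : (∑ e ∈ Finset.Icc 1 (N - 1),
            (J e - J (e + 1)) * (if i < j ∧ j ≤ i + e ∧ f i ≠ f j then (1:ℝ) else 0))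
          = ∑ e ∈ Finset.Icc (j - i) (N - 1), (J e - J (e + 1)) := by
        calc (∑ e ∈ Finset.Icc 1 (N - 1),
              (J e - J (e + 1)) * (if i < j ∧ j ≤ i + e ∧ f i ≠ f j then (1:ℝ) else 0))
            = ∑ e ∈ Finset.Icc 1 (N - 1), (if j ≤ i + e then (J e - J (e + 1)) else 0) := by
              refine Finset.sum_congr rfl fun e _ => ?_
              by_cases hje : j ≤ i + e
              · rw [if_pos hje, if_pos ⟨hij, hje, hfij⟩, mul_one]
              · rw [if_neg hje, if_neg (by tauto), mul_zero]
          _ = ∑ e ∈ (Finset.Icc 1 (N - 1)).filter (fun e => j ≤ i + e), (J e - J (e + 1)) :=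
              (Finset.sum_filter _ _).symm
          _ = ∑ e ∈ Finset.Icc (j - i) (N - 1), (J e - J (e + 1)) := by
              congr 1
              ext e
              simp only [Finset.mem_filter, Finset.mem_Icc]
              omega
      rw [hsum, telescope J (j - i) (N - 1) hd2]
      have hN1 : N - 1 + 1 = N := by omega
      rw [hN1]
      ring
    · rw [if_neg hc, if_neg (fun hx => hc ⟨hx.1, hx.2.2⟩), mul_zero, zero_add]
      exact (Finset.sum_eq_zero fun e _ => by
        rw [if_neg (fun hx => hc ⟨hx.1, hx.2.2⟩), mul_zero]).symm
  calc EJ N J f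
      = ∑ i ∈ range N, ∑ j ∈ range N,
          (J N * (if i < j ∧ j ≤ i + (N - 1) ∧ f i ≠ f j then (1:ℝ) else 0)
            + ∑ e ∈ Finset.Icc 1 (N - 1),
                (J e - J (e + 1)) * (if i < j ∧ j ≤ i + e ∧ f i ≠ f j then (1:ℝ) else 0)) :=
        Finset.sum_congr rfl fun i hi => Finset.sum_congr rfl fun j hj => key i hi j hj
    _ = (∑ i ∈ range N, ∑ j ∈ range N,
          J N * (if i < j ∧ j ≤ i + (N - 1) ∧ f i ≠ f j then (1:ℝ) else 0))
        + ∑ i ∈ range N, ∑ j ∈ range N, ∑ e ∈ Finset.Icc 1 (N - 1),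
            (J e - J (e + 1)) * (if i < j ∧ j ≤ i + e ∧ f i ≠ f j then (1:ℝ) else 0) := by
        rw [← Finset.sum_add_distrib]
        refine Finset.sum_congr rfl fun i _ => ?_
        rw [← Finset.sum_add_distrib]
    _ = J N * (Se N (N - 1) f : ℝ)
      + ∑ e ∈ Finset.Icc 1 (N - 1), (J e - J (e + 1)) * (Se N e f : ℝ) := by
        congr 1
        · rw [cast_Se, Finset.mul_sum]
          refine Finset.sum_congr rfl fun i _ => ?_
          rw [Finset.mul_sum]
        · calc (∑ i ∈ range N, ∑ j ∈ range N, ∑ e ∈ Finset.Icc 1 (N - 1),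
                  (J e - J (e + 1)) * (if i < j ∧ j ≤ i + e ∧ f i ≠ f j then (1:ℝ) else 0))
              = ∑ i ∈ range N, ∑ e ∈ Finset.Icc 1 (N - 1), ∑ j ∈ range N,
                  (J e - J (e + 1)) * (if i < j ∧ j ≤ i + e ∧ f i ≠ f j then (1:ℝ) else 0) :=
                Finset.sum_congr rfl fun i _ => Finset.sum_comm
            _ = ∑ e ∈ Finset.Icc 1 (N - 1), ∑ i ∈ range N, ∑ j ∈ range N,
                  (J e - J (e + 1)) * (if i < j ∧ j ≤ i + e ∧ f i ≠ f j then (1:ℝ) else 0) :=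
                Finset.sum_comm
            _ = ∑ e ∈ Finset.Icc 1 (N - 1), (J e - J (e + 1)) * (Se N e f : ℝ) := by
                refine Finset.sum_congr rfl fun e _ => ?_
                rw [cast_Se, Finset.mul_sum]
                refine Finset.sum_congr rfl fun i _ => ?_
                rw [Finset.mul_sum]

lemma EJ_ge (N : ℕ) (J : ℕ → ℝ) (hdec : ∀ n, 1 ≤ n → J (n + 1) < J n) (f : ℕ → Bool) :
    EJ N J (chi (cnt N f)) ≤ EJ N J f := by
  rw [EJ_eq, EJ_eq]
  have hcnt : cnt N (chi (cnt N f)) = cnt N f := by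
    rw [cnt_chi]
    have := cnt_le N f
    omega
  refine add_le_add ?_ ?_
  · have hS : Se N (N - 1) (chi (cnt N f)) = Se N (N - 1) f := by rw [Stot, Stot, hcnt]
    rw [hS]
  · refine Finset.sum_le_sum fun e he => ?_
    have h1 : 0 ≤ J e - J (e + 1) := by
      have := hdec e (Finset.mem_Icc.mp he).1
      linarith
    have h2 : (Se N e (chi (cnt N f)) : ℝ) ≤ (Se N e f : ℝ) := Nat.cast_le.mpr (Se_key e N f)
    exact mul_le_mul_of_nonneg_left h2 h1


noncomputable def fC {N : ℕ} (σ : Fin N → ℝ) : ℕ → Bool :=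
  fun n => if h : n < N then (if σ ⟨n, h⟩ = 1 then true else false) else false

lemma sigma_eq {N : ℕ} {σ : Fin N → ℝ} (hσ : IsConfig σ) (i : Fin N) :
    σ i = if fC σ i.val then 1 else -1 := by
  rcases hσ i with h1 | h1 <;>
    simp only [fC, i.isLt, dif_pos, Fin.eta, h1] <;> norm_num

lemma cnt_cast (N : ℕ) (f : ℕ → Bool) :
    ((cnt N f : ℕ) : ℝ) = ∑ n ∈ range N, (if f n then (1:ℝ) else 0) := by
  unfold cnt
  push_cast
  rfl

lemma H_eq (N : ℕ) (J : ℕ → ℝ) (h : ℝ) (σ : Fin N → ℝ) (hσ : IsConfig σ) :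
    H N J h σ = -(∑ i ∈ range N, ∑ j ∈ range N, if i < j then J (j - i) else 0)
      + 2 * EJ N J (fC σ) - h * (2 * (cnt N (fC σ) : ℝ) - N) := by
  set f := fC σ with hf
  set F : ℕ → ℝ := fun n => if f n then (1:ℝ) else -1 with hF
  have hσ' : ∀ i : Fin N, σ i = F i.val := fun i => sigma_eq hσ i
  have sumfield : (∑ i : Fin N, σ i) = 2 * ((cnt N f : ℕ) : ℝ) - N := by
    calc (∑ i : Fin N, σ i) = ∑ i : Fin N, F i.val :=
          Finset.sum_congr rfl fun i _ => hσ' i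
      _ = ∑ n ∈ range N, F n := Fin.sum_univ_eq_sum_range F N
      _ = ∑ n ∈ range N, (2 * (if f n then (1:ℝ) else 0) - 1) := by
          refine Finset.sum_congr rfl fun n _ => ?_
          rw [hF]
          cases hfn : f n <;> norm_num [hfn]
      _ = 2 * ((cnt N f : ℕ) : ℝ) - N := by
          rw [Finset.sum_sub_distrib, ← Finset.mul_sum, ← cnt_cast]
          simp
  have suminter : (∑ i : Fin N, ∑ j : Fin N,
        if (i : ℕ) < (j : ℕ) then J (Nat.dist (i : ℕ) (j : ℕ)) * σ i * σ j else 0)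
      = (∑ i ∈ range N, ∑ j ∈ range N, if i < j then J (j - i) else 0)
        - 2 * EJ N J f := by
    have step1 : (∑ i : Fin N, ∑ j : Fin N,
          if (i : ℕ) < (j : ℕ) then J (Nat.dist (i : ℕ) (j : ℕ)) * σ i * σ j else 0)
        = ∑ i ∈ range N, ∑ j ∈ range N,
            (if i < j then J (j - i) * F i * F j else 0) := by
      have inner : ∀ m : ℕ, (∑ j : Fin N, if m < (j : ℕ) then J (Nat.dist m (j : ℕ)) * F m * F (j : ℕ) else 0)
          = ∑ n ∈ range N, (if m < n then J (n - m) * F m * F n else 0) := by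
        intro m
        rw [Fin.sum_univ_eq_sum_range (fun n => if m < n then J (Nat.dist m n) * F m * F n else 0) N]
        refine Finset.sum_congr rfl fun n _ => ?_
        by_cases hmn : m < n
        · rw [if_pos hmn, if_pos hmn, Nat.dist_eq_sub_of_le (le_of_lt hmn)]
        · rw [if_neg hmn, if_neg hmn]
      calc (∑ i : Fin N, ∑ j : Fin N,
            if (i : ℕ) < (j : ℕ) then J (Nat.dist (i : ℕ) (j : ℕ)) * σ i * σ j else 0)
          = ∑ i : Fin N, ∑ j : Fin N,
              (if (i : ℕ) < (j : ℕ) then J (Nat.dist (i : ℕ) (j : ℕ)) * F (i : ℕ) * F (j : ℕ) else 0) := by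
            refine Finset.sum_congr rfl fun i _ => Finset.sum_congr rfl fun j _ => ?_
            rw [hσ' i, hσ' j]
        _ = ∑ i : Fin N, (∑ n ∈ range N, (if (i : ℕ) < n then J (n - (i : ℕ)) * F (i : ℕ) * F n else 0)) :=
            Finset.sum_congr rfl fun i _ => inner (i : ℕ)
        _ = ∑ m ∈ range N, (∑ n ∈ range N, (if m < n then J (n - m) * F m * F n else 0)) :=
            Fin.sum_univ_eq_sum_range (fun m => ∑ n ∈ range N, (if m < n then J (n - m) * F m * F n else 0)) N
    rw [step1]
    unfold EJ
    rw [Finset.mul_sum, ← Finset.sum_sub_distrib]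
    refine Finset.sum_congr rfl fun i _ => ?_
    rw [Finset.mul_sum, ← Finset.sum_sub_distrib]
    refine Finset.sum_congr rfl fun j _ => ?_
    by_cases hij : i < j
    · cases hfi : f i <;> cases hfj : f j <;>
        simp only [hF, hfi, hfj, if_pos hij, hij, true_and, if_true, if_false, ne_eq,
          Bool.false_eq_true, Bool.true_eq_false, not_false_eq_true, not_true_eq_false] <;>
        ring
    · simp [hij]
  unfold H
  rw [suminter, sumfield]
  ring

lemma Lconf_isConfig (N k : ℕ) : IsConfig (Lconf N k) := by
  intro i
  unfold Lconf
  split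
  · left; rfl
  · right; rfl

lemma fC_Lconf (N k : ℕ) : ∀ n < N, fC (Lconf N k) n = chi k n := by
  intro n hn
  simp only [fC, Lconf, hn, dif_pos, chi]
  by_cases h : n < k <;> simp [h] <;> norm_num

lemma H_ge (N : ℕ) (J : ℕ → ℝ) (h : ℝ) (hdec : ∀ n, 1 ≤ n → J (n + 1) < J n)
    (σ : Fin N → ℝ) (hσ : IsConfig σ) :
    H N J h (Lconf N (cnt N (fC σ))) ≤ H N J h σ := by
  set k := cnt N (fC σ) with hk
  have hkN : k ≤ N := cnt_le _ _
  have hL : IsConfig (Lconf N k) := Lconf_isConfig N k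
  rw [H_eq N J h σ hσ, H_eq N J h _ hL]
  have e1 : EJ N J (fC (Lconf N k)) = EJ N J (chi k) := EJ_congr J (fC_Lconf N k)
  have e2 : cnt N (fC (Lconf N k)) = k := by
    rw [cnt_congr (fC_Lconf N k), cnt_chi]
    omega
  rw [e1, e2]
  have := EJ_ge N J hdec (fC σ)
  rw [← hk] at this
  linarith

lemma le_foldr_max_self (l : List ℝ) (a : ℝ) : a ≤ l.foldr max a := by
  induction l with
  | nil => exact le_refl a
  | cons x t ih => exact le_trans ih (le_max_right x _)

lemma le_foldr_max_of_mem {l : List ℝ} {b : ℝ} (a : ℝ) (hb : b ∈ l) : b ≤ l.foldr max a := by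
  induction l with
  | nil => cases hb
  | cons x t ih =>
    rcases List.mem_cons.mp hb with hE | hE
    · subst hE; exact le_max_left _ _
    · exact le_trans (ih hE) (le_max_right _ _)

lemma foldr_max_le {l : List ℝ} {a M : ℝ} (ha : a ≤ M) (hl : ∀ b ∈ l, b ≤ M) :
    l.foldr max a ≤ M := by
  induction l with
  | nil => exact ha
  | cons x t ih =>
    exact max_le (hl x List.mem_cons_self) (ih fun b hb => hl b (List.mem_cons_of_mem x hb))

lemma chain'_imp_mem {α : Type*} {R S : α → α → Prop} :
    ∀ {l : List α}, List.Chain' R l → (∀ a ∈ l, ∀ b ∈ l, R a b → S a b) → List.Chain' S l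
  | [] , _, _ => List.IsChain.nil
  | [_], _, _ => List.isChain_singleton _
  | a :: b :: t, hch, hm => by
    rw [List.Chain', List.isChain_cons_cons] at hch ⊢
    refine ⟨hm a (by simp) b (by simp) hch.1, ?_⟩
    exact chain'_imp_mem hch.2 (fun x hx y hy hr =>
      hm x (List.mem_cons_of_mem a hx) y (List.mem_cons_of_mem a hy) hr)

lemma ivt {α : Type*} (m : α → ℕ) (k : ℕ) :
    ∀ (l : List α) (a : α),
      List.Chain' (fun x y => m y = m x + 1 ∨ m x = m y + 1) (a :: l) →
      m a ≤ k → k ≤ m ((a :: l).getLast (List.cons_ne_nil a l)) → ∃ τ ∈ a :: l, m τ = k := by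
  intro l
  induction l with
  | nil =>
    intro a _ h1 h2
    have : (([a] : List α).getLast (List.cons_ne_nil a [])) = a := rfl
    rw [this] at h2
    exact ⟨a, by simp, by omega⟩
  | cons b t ih =>
    intro a hchain h1 h2
    rw [List.Chain', List.isChain_cons_cons] at hchain
    obtain ⟨hab, hchain2⟩ := hchain
    by_cases hk : m a = k
    · exact ⟨a, by simp, hk⟩
    · have h1' : m b ≤ k := by omega
      have h2' : k ≤ m ((b :: t).getLast (List.cons_ne_nil b t)) := by
        rwa [List.getLast_cons (List.cons_ne_nil b t)] at h2
      obtain ⟨τ, hτ, hτk⟩ := ih b hchain2 h1' h2'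
      exact ⟨τ, List.mem_cons_of_mem a hτ, hτk⟩

lemma flip_cnt {N : ℕ} {a : Fin N → ℝ} (ha : IsConfig a) (i : Fin N) :
    cnt N (fC (Function.update a i (-(a i)))) = cnt N (fC a) + 1 ∨
      cnt N (fC a) = cnt N (fC (Function.update a i (-(a i)))) + 1 := by
  set b := Function.update a i (-(a i)) with hb
  have hmem : (i : ℕ) ∈ range N := mem_range.mpr i.isLt
  have hsplit : ∀ g : ℕ → Bool, cnt N g
      = ∑ n ∈ range N \ {(i : ℕ)}, (if g n then 1 else 0) + (if g (i : ℕ) then 1 else 0) :=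
    fun g => Finset.sum_eq_sum_sdiff_singleton_add hmem _
  have hagree : ∀ n ∈ range N \ {(i : ℕ)},
      (if fC b n then 1 else 0) = ((if fC a n then 1 else 0) : ℕ) := by
    intro n hn
    rw [Finset.mem_sdiff, Finset.mem_range, Finset.mem_singleton] at hn
    obtain ⟨hn1, hn2⟩ := hn
    have hEq : fC b n = fC a n := by
      simp only [fC, hn1, dif_pos]
      have : b ⟨n, hn1⟩ = a ⟨n, hn1⟩ := by
        rw [hb]
        exact Function.update_of_ne (fun hE => hn2 (congrArg Fin.val hE)) _ _
      rw [this]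
    rw [hEq]
  have hbi : b i = -(a i) := by rw [hb]; exact Function.update_self _ _ _
  rcases ha i with h1 | h1
  · right
    have hfa : fC a (i : ℕ) = true := by
      simp only [fC, i.isLt, dif_pos, Fin.eta, h1]
      simp
    have hfb : fC b (i : ℕ) = false := by
      simp only [fC, i.isLt, dif_pos, Fin.eta, hbi, h1]
      norm_num
    rw [hsplit (fC a), hsplit (fC b), Finset.sum_congr rfl hagree, hfa, hfb]
    simp
  · left
    have hfa : fC a (i : ℕ) = false := by
      simp only [fC, i.isLt, dif_pos, Fin.eta, h1]
      norm_num
    have hfb : fC b (i : ℕ) = true := by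
      simp only [fC, i.isLt, dif_pos, Fin.eta, hbi, h1]
      norm_num
    rw [hsplit (fC a), hsplit (fC b), Finset.sum_congr rfl hagree, hfa, hfb]
    simp

lemma cnt_allminus (N : ℕ) : cnt N (fC (fun _ : Fin N => (-1 : ℝ))) = 0 := by
  refine Finset.sum_eq_zero fun n hn => ?_
  have hEq : fC (fun _ : Fin N => (-1 : ℝ)) n = false := by
    unfold fC
    split
    · rw [if_neg (by norm_num)]
    · rfl
  rw [hEq]
  rfl

lemma cnt_allplus (N : ℕ) : cnt N (fC (fun _ : Fin N => (1 : ℝ))) = N := by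
  unfold cnt
  have hEq : ∀ n ∈ range N, (if fC (fun _ : Fin N => (1 : ℝ)) n then 1 else 0) = 1 := by
    intro n hn
    have hn' := mem_range.mp hn
    have : fC (fun _ : Fin N => (1 : ℝ)) n = true := by
      unfold fC
      rw [dif_pos hn', if_pos rfl]
    rw [this]
    rfl
  rw [Finset.sum_congr rfl hEq]
  simp

lemma Lconf_zero (N : ℕ) : Lconf N 0 = (fun _ => (-1 : ℝ)) := by
  funext i
  simp [Lconf]

lemma Lconf_top (N : ℕ) : Lconf N N = (fun _ => (1 : ℝ)) := by
  funext i
  simp [Lconf, i.isLt]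

lemma Lconf_flip (N m : ℕ) (hm : m < N) : IsFlip (Lconf N m) (Lconf N (m + 1)) := by
  refine ⟨⟨m, hm⟩, ?_⟩
  funext j
  by_cases hj : j = ⟨m, hm⟩
  · subst hj
    rw [Function.update_self]
    simp only [Lconf]
    norm_num
  · rw [Function.update_of_ne hj]
    have hne : (j : ℕ) ≠ m := fun hc => hj (Fin.ext hc)
    simp only [Lconf]
    by_cases h2 : (j : ℕ) < m
    · rw [if_pos h2, if_pos (by omega)]
    · rw [if_neg h2, if_neg (by omega)]

lemma Lpath_isPath (N : ℕ) :
    IsPathFrom ((List.range (N + 1)).map (Lconf N)) (fun _ => (-1 : ℝ)) (fun _ => (1 : ℝ)) := by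
  refine ⟨by simp, ?_, ?_, ?_, ?_⟩
  · rw [List.range_succ_eq_map]
    simp only [List.map_cons, List.head?_cons, Lconf_zero]
  · have : List.range (N + 1) = List.range N ++ [N] := by rw [List.range_succ]
    rw [this, List.map_append, List.map_cons, List.map_nil, List.getLast?_concat, Lconf_top]
  · intro τ hτ
    obtain ⟨k, _, rfl⟩ := List.mem_map.mp hτ
    exact Lconf_isConfig N k
  · rw [List.Chain', List.isChain_map, List.isChain_range_succ]
    intro m hm
    exact Lconf_flip N m hm

end CH

/-- Theorem 3.1(1) (minimax): the communication height between the all-minus and the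
all-plus configuration equals `max_{0 ≤ k ≤ N} H(L^(k))`. -/
theorem communication_height_eq_max (N : ℕ) (hN : 2 ≤ N) (J : ℕ → ℝ)
    (hpos : ∀ n, 1 ≤ n → 0 < J n) (hdec : ∀ n, 1 ≤ n → J (n + 1) < J n)
    (h : ℝ) (hh0 : 0 < h) (hh1 : h < ∑ n ∈ Finset.Icc 1 (N - 1), J n) :
    Phi N J h (fun _ => -1) (fun _ => 1) =
      (Finset.range (N + 1)).sup' (by simp) (fun k => H N J h (Lconf N k)) := by
  classical
  have hne : (Finset.range (N + 1)).Nonempty := by simp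
  set M := (Finset.range (N + 1)).sup' (by simp) (fun k => H N J h (Lconf N k)) with hM
  have hlow : ∀ x ∈ {x | ∃ γ : List (Fin N → ℝ), IsPathFrom γ (fun _ => -1) (fun _ => 1) ∧
      x = (γ.map (H N J h)).foldr max (H N J h (fun _ => -1))}, M ≤ x := by
    rintro x ⟨γ, ⟨hγne, hhead, hlast, hconf, hchain⟩, rfl⟩
    obtain ⟨k0, hk0mem, hk0⟩ := Finset.exists_mem_eq_sup' hne (fun k => H N J h (Lconf N k))
    have hk0N : k0 ≤ N := by
      have := Finset.mem_range.mp hk0mem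
      omega
    obtain ⟨c, t, rfl⟩ : ∃ c t, γ = c :: t := by
      cases γ with
      | nil => exact absurd rfl hγne
      | cons c t => exact ⟨c, t, rfl⟩
    have hc : c = (fun _ => (-1 : ℝ)) := by
      have : some c = some (fun _ => (-1 : ℝ)) := hhead
      exact Option.some_injective _ this
    have hchain2 : List.Chain' (fun x y => CH.cnt N (CH.fC y) = CH.cnt N (CH.fC x) + 1 ∨
        CH.cnt N (CH.fC x) = CH.cnt N (CH.fC y) + 1) (c :: t) := by
      refine CH.chain'_imp_mem hchain ?_
      intro a haM b hbM hab
      obtain ⟨i, rfl⟩ := hab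
      exact CH.flip_cnt (hconf a haM) i
    have hlastval : (c :: t).getLast (List.cons_ne_nil c t) = (fun _ => (1 : ℝ)) := by
      have h5 := List.getLast?_eq_getLast (List.cons_ne_nil c t)
      rw [hlast] at h5
      exact (Option.some_injective _ h5).symm
    have h1 : CH.cnt N (CH.fC c) ≤ k0 := by
      rw [hc, CH.cnt_allminus]
      omega
    have h2 : k0 ≤ CH.cnt N (CH.fC ((c :: t).getLast (List.cons_ne_nil c t))) := by
      rw [hlastval, CH.cnt_allplus]
      exact hk0N
    obtain ⟨τ, hτmem, hτk⟩ := CH.ivt (fun τ => CH.cnt N (CH.fC τ)) k0 t c hchain2 h1 h2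
    have hHτ : M ≤ H N J h τ := by
      rw [hM, hk0]
      calc H N J h (Lconf N k0) = H N J h (Lconf N (CH.cnt N (CH.fC τ))) := by rw [hτk]
        _ ≤ H N J h τ := CH.H_ge N J h hdec τ (hconf τ hτmem)
    calc M ≤ H N J h τ := hHτ
      _ ≤ ((c :: t).map (H N J h)).foldr max (H N J h (fun _ => -1)) :=
          CH.le_foldr_max_of_mem _ (List.mem_map_of_mem hτmem)
  set γ0 := (List.range (N + 1)).map (Lconf N) with hγ0
  have hmem0 : (γ0.map (H N J h)).foldr max (H N J h (fun _ => -1)) ∈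
      {x | ∃ γ : List (Fin N → ℝ), IsPathFrom γ (fun _ => -1) (fun _ => 1) ∧
        x = (γ.map (H N J h)).foldr max (H N J h (fun _ => -1))} :=
    ⟨γ0, CH.Lpath_isPath N, rfl⟩
  have hle0 : (γ0.map (H N J h)).foldr max (H N J h (fun _ => -1)) ≤ M := by
    refine CH.foldr_max_le ?_ ?_
    · rw [← CH.Lconf_zero]
      exact Finset.le_sup' (fun k => H N J h (Lconf N k)) (Finset.mem_range.mpr (by omega))
    · intro b hb
      obtain ⟨τ, hτmem, rfl⟩ := List.mem_map.mp hb
      rw [hγ0] at hτmem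
      obtain ⟨k, hkmem, rfl⟩ := List.mem_map.mp hτmem
      have hk : k < N + 1 := List.mem_range.mp hkmem
      exact Finset.le_sup' (fun k => H N J h (Lconf N k)) (Finset.mem_range.mpr hk)
  unfold Phi
  refine le_antisymm ?_ ?_
  · exact le_trans (csInf_le ⟨M, hlow⟩ hmem0) hle0
  · exact le_csInf ⟨_, hmem0⟩ hlow
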